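/- (Uniform Bollobás) Let (A_i, B_i) for i = 1, ..., m be pairs of finite sets with |A_i| ≤ a, |B_i| ≤ b for all i, A_i ∩ B_i = ∅ for all i, and A_i ∩ B_j ≠ ∅ for all i ≠ j. Then m ≤ C(a+b, a). -/

import Mathlib

open Finset Equiv

def rankPerm {d : ℕ} (T : Finset (Fin d)) : Equiv.Perm (Fin d) :=
  (Equiv.Set.sumCompl {x | x ∈ T}).symm.trans <|
    (Equiv.sumCongr
      ((Equiv.subtypeEquivRight (fun x => by simp)).trans (T.orderIsoOfFin rfl).toEquiv.symm)
      ((Equiv.subtypeEquivRight (fun x => by simp)).trans ((Tᶜ).orderIsoOfFin rfl).toEquiv.symm)).trans <|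
    (finSumFinEquiv.trans (finCongr (by simp [Finset.card_add_card_compl])))

lemma rankPerm_lt {d : ℕ} {T : Finset (Fin d)} {k : Fin d} (hk : k ∈ T) :
    (rankPerm T k : ℕ) < T.card := by
  have hk' : k ∈ {x | x ∈ T} := hk
  simp only [rankPerm, Equiv.trans_apply, Equiv.Set.sumCompl_symm_apply_of_mem hk',
    Equiv.sumCongr_apply, Sum.map_inl, finSumFinEquiv_apply_left, finCongr_apply,
    Fin.coe_cast, Fin.coe_castAdd]
  exact ((T.orderIsoOfFin rfl).symm _).isLt

lemma rankPerm_ge {d : ℕ} {T : Finset (Fin d)} {k : Fin d} (hk : k ∉ T) :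
    T.card ≤ (rankPerm T k : ℕ) := by
  have hk' : k ∉ {x | x ∈ T} := hk
  simp only [rankPerm, Equiv.trans_apply, Equiv.Set.sumCompl_symm_apply_of_notMem hk',
    Equiv.sumCongr_apply, Sum.map_inr, finSumFinEquiv_apply_right, finCongr_apply,
    Fin.coe_cast, Fin.coe_natAdd]
  exact Nat.le_add_right _ _

def sortPerm {n : ℕ} (P S : Finset (Fin n)) : Equiv.Perm (Fin n) :=
  Equiv.Perm.ofSubtype (p := (· ∈ P))
    ((P.orderIsoOfFin rfl).toEquiv.symm.trans
      ((rankPerm (univ.filter fun k => ((P.orderIsoOfFin rfl) k : Fin n) ∈ S)).trans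
        (P.orderIsoOfFin rfl).toEquiv))

lemma sortPerm_mem {n : ℕ} {P : Finset (Fin n)} (S : Finset (Fin n)) {x : Fin n}
    (hx : x ∈ P) : sortPerm P S x ∈ P := by
  rw [sortPerm, Equiv.Perm.ofSubtype_apply_of_mem _ hx]
  exact Subtype.mem _

lemma sortPerm_lt {n : ℕ} {P S : Finset (Fin n)} (hSP : S ⊆ P) {x y : Fin n}
    (hx : x ∈ S) (hy : y ∈ P) (hyS : y ∉ S) : sortPerm P S x < sortPerm P S y := by
  have hxP : x ∈ P := hSP hx
  rw [sortPerm, Equiv.Perm.ofSubtype_apply_of_mem _ hxP, Equiv.Perm.ofSubtype_apply_of_mem _ hy]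
  set e := P.orderIsoOfFin rfl
  set T : Finset (Fin P.card) := univ.filter fun k => ((e k : Fin n) ∈ S)
  simp only [Equiv.trans_apply, OrderIso.toEquiv_symm, RelIso.coe_fn_toEquiv]
  have h1 : e.symm ⟨x, hxP⟩ ∈ T := by
    simp only [T, mem_filter, mem_univ, true_and, e.apply_symm_apply]
    exact hx
  have h2 : e.symm ⟨y, hy⟩ ∉ T := by
    simp only [T, mem_filter, mem_univ, true_and, e.apply_symm_apply]
    exact hyS
  have := (rankPerm_lt h1).trans_le (rankPerm_ge h2)
  have h3 : rankPerm T (e.symm ⟨x, hxP⟩) < rankPerm T (e.symm ⟨y, hy⟩) := this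
  have := e.strictMono h3
  exact this

lemma sortPerm_image {n : ℕ} (P S : Finset (Fin n)) : P.image (sortPerm P S) = P := by
  apply Finset.eq_of_subset_of_card_le
  · intro z hz
    simp only [Finset.mem_image] at hz
    obtain ⟨x, hx, rfl⟩ := hz
    exact sortPerm_mem S hx
  · rw [Finset.card_image_of_injective _ (sortPerm P S).injective]

lemma choose_step (x y : ℕ) : (x + y).choose x ≤ (x + 1 + y).choose (x + 1) := by
  have h : (x + 1 + y).choose (x + 1) = (x + y).choose x + (x + y).choose (x + 1) := by
    have hxy : x + 1 + y = (x + y) + 1 := by ring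
    rw [hxy, Nat.choose_succ_succ]
  omega

lemma choose_mono2 {a' a b' b : ℕ} (ha : a' ≤ a) (hb : b' ≤ b) :
    (a' + b').choose a' ≤ (a + b).choose a := by
  have h1 : (a' + b').choose a' ≤ (a + b').choose a := by
    induction a, ha using Nat.le_induction with
    | base => exact le_refl _
    | succ k hk ih => exact ih.trans (choose_step k b')
  exact h1.trans (Nat.choose_le_choose a (by omega))

lemma key {β : Type*} [Fintype β] [DecidableEq β] {m a b : ℕ}
    (A B : Fin m → Finset β)
    (hA : ∀ i, (A i).card ≤ a) (hB : ∀ i, (B i).card ≤ b)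
    (hdisj : ∀ i, A i ∩ B i = ∅)
    (hcross : ∀ i j, i ≠ j → (A i ∩ B j).Nonempty) :
    m ≤ (a + b).choose a := by
  classical
  set n := Fintype.card β with hn
  set good : Fin m → Finset (β ≃ Fin n) := fun i =>
    univ.filter (fun σ => ∀ x ∈ A i, ∀ y ∈ B i, σ x < σ y) with hgood
  have hcardΩ : Fintype.card (β ≃ Fin n) = n.factorial :=
    Fintype.card_equiv (Fintype.equivFin β)
  -- counting claim
  have hcount : ∀ i, n.factorial ≤ (a + b).choose a * (good i).card := by
    intro i
    have hABdisj : Disjoint (A i) (B i) := Finset.disjoint_iff_inter_eq_empty.2 (hdisj i)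
    set D : Finset β := A i ∪ B i with hD
    set Φ : (β ≃ Fin n) → (β ≃ Fin n) := fun σ =>
      σ.trans (sortPerm (D.image σ) ((A i).image σ)) with hΦ
    have hSsubP : ∀ σ : β ≃ Fin n, (A i).image σ ⊆ D.image σ := fun σ =>
      Finset.image_subset_image Finset.subset_union_left
    -- image of Φ is good
    have himg : ∀ σ : β ≃ Fin n, Φ σ ∈ good i := by
      intro σ
      simp only [hgood, mem_filter, mem_univ, true_and]
      intro x hx y hy
      have hxS : σ x ∈ (A i).image σ := Finset.mem_image_of_mem _ hx
      have hyP : σ y ∈ D.image σ := Finset.mem_image_of_mem _ (Finset.mem_union_right _ hy)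
      have hyS : σ y ∉ (A i).image σ := by
        simp only [Finset.mem_image]
        rintro ⟨x', hx', hxy⟩
        have : x' = y := σ.injective hxy
        subst this
        have hmem : x' ∈ A i ∩ B i := Finset.mem_inter.2 ⟨hx', hy⟩
        rw [hdisj i] at hmem
        exact absurd hmem (Finset.notMem_empty _)
      exact sortPerm_lt (hSsubP σ) hxS hyP hyS
    -- image of D is preserved
    have himgD : ∀ σ : β ≃ Fin n, D.image (Φ σ) = D.image σ := by
      intro σ
      have h1 : D.image (Φ σ) = (D.image σ).image (sortPerm (D.image σ) ((A i).image σ)) := by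
        rw [Finset.image_image]
        rfl
      rw [h1, sortPerm_image]
    have hdcard : D.card = (A i).card + (B i).card := Finset.card_union_of_disjoint hABdisj
    -- fiber bound
    have hfiber : ∀ τ ∈ (univ : Finset (β ≃ Fin n)).image Φ,
        (univ.filter fun σ => Φ σ = τ).card ≤ (a + b).choose a := by
      intro τ hτ
      have hle : (univ.filter fun σ => Φ σ = τ).card
          ≤ ((D.image τ).powersetCard (A i).card).card := by
        refine Finset.card_le_card_of_injOn (fun σ => (A i).image ⇑σ) ?_ ?_
        · intro σ hσ
          simp only [Finset.coe_filter, Set.mem_setOf_eq, mem_univ, true_and] at hσ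
          rw [Finset.mem_coe, Finset.mem_powersetCard]
          constructor
          · rw [← hσ, himgD σ]
            exact hSsubP σ
          · exact Finset.card_image_of_injective _ σ.injective
        · intro σ1 hσ1 σ2 hσ2 hS
          simp only [Finset.coe_filter, Set.mem_setOf_eq, mem_univ, true_and] at hσ1 hσ2
          have hP : D.image σ1 = D.image σ2 := by
            rw [← himgD σ1, ← himgD σ2, hσ1, hσ2]
          have hπ : sortPerm (D.image σ1) ((A i).image σ1)
              = sortPerm (D.image σ2) ((A i).image σ2) := by
            rw [hP, show Finset.image (⇑σ1) (A i) = Finset.image (⇑σ2) (A i) from hS]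
          have h12 : Φ σ1 = Φ σ2 := hσ1.trans hσ2.symm
          ext x
          have hx : sortPerm (D.image σ1) ((A i).image σ1) (σ1 x)
              = sortPerm (D.image σ2) ((A i).image σ2) (σ2 x) := by
            have := congrArg (fun e : β ≃ Fin n => e x) h12
            exact this
          rw [hπ] at hx
          exact congrArg Fin.val ((sortPerm (D.image σ2) ((A i).image σ2)).injective hx)
      have hcard2 : ((D.image τ).powersetCard (A i).card).card ≤ (a + b).choose a := by
        rw [Finset.card_powersetCard]
        obtain ⟨σ, _, rfl⟩ := Finset.mem_image.1 hτ
        rw [himgD σ, Finset.card_image_of_injective _ σ.injective, hdcard]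
        exact choose_mono2 (hA i) (hB i)
      exact hle.trans hcard2
    have hmain := Finset.card_le_mul_card_image (f := Φ) (univ : Finset (β ≃ Fin n))
      ((a + b).choose a) hfiber
    have himg2 : (univ : Finset (β ≃ Fin n)).image Φ ⊆ good i := by
      intro τ hτ
      obtain ⟨σ, _, rfl⟩ := Finset.mem_image.1 hτ
      exact himg σ
    calc n.factorial = (univ : Finset (β ≃ Fin n)).card := by
          rw [Finset.card_univ, hcardΩ]
      _ ≤ (a + b).choose a * ((univ : Finset (β ≃ Fin n)).image Φ).card := hmain
      _ ≤ (a + b).choose a * (good i).card :=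
          Nat.mul_le_mul_left _ (Finset.card_le_card himg2)
  -- disjointness of good sets
  have hgdisj : ∀ i ∈ (univ : Finset (Fin m)), ∀ j ∈ univ, i ≠ j →
      Disjoint (good i) (good j) := by
    intro i _ j _ hij
    rw [Finset.disjoint_left]
    intro σ hσi hσj
    simp only [hgood, mem_filter, mem_univ, true_and] at hσi hσj
    obtain ⟨x, hx⟩ := hcross i j hij
    obtain ⟨y, hy⟩ := hcross j i hij.symm
    rw [Finset.mem_inter] at hx hy
    exact lt_asymm (hσi x hx.1 y hy.2) (hσj y hy.1 x hx.2)
  have hsum : ∑ i, (good i).card ≤ n.factorial := by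
    rw [← Finset.card_biUnion hgdisj]
    calc ((univ : Finset (Fin m)).biUnion good).card
        ≤ (univ : Finset (β ≃ Fin n)).card := Finset.card_le_card (Finset.subset_univ _)
      _ = n.factorial := by rw [Finset.card_univ, hcardΩ]
  have : m * n.factorial ≤ (a + b).choose a * n.factorial := by
    calc m * n.factorial = ∑ _i : Fin m, n.factorial := by
          rw [Finset.sum_const, Finset.card_univ, Fintype.card_fin, smul_eq_mul]
      _ ≤ ∑ i, (a + b).choose a * (good i).card := Finset.sum_le_sum fun i _ => hcount i
      _ = (a + b).choose a * ∑ i, (good i).card := by rw [Finset.mul_sum]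
      _ ≤ (a + b).choose a * n.factorial := Nat.mul_le_mul_left _ hsum
  exact Nat.le_of_mul_le_mul_right this n.factorial_pos

theorem stmt_6 {α : Type*} [DecidableEq α] {m a b : ℕ}
    (A B : Fin m → Finset α)
    (hA : ∀ i, (A i).card ≤ a) (hB : ∀ i, (B i).card ≤ b)
    (hdisj : ∀ i, A i ∩ B i = ∅)
    (hcross : ∀ i j, i ≠ j → (A i ∩ B j).Nonempty) :
    m ≤ (a + b).choose a := by
  classical
  set X : Finset α := Finset.univ.biUnion (fun i => A i ∪ B i) with hX
  have hAX : ∀ i, A i ⊆ X := fun i x hx =>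
    Finset.mem_biUnion.2 ⟨i, Finset.mem_univ i, Finset.mem_union_left _ hx⟩
  have hBX : ∀ i, B i ⊆ X := fun i x hx =>
    Finset.mem_biUnion.2 ⟨i, Finset.mem_univ i, Finset.mem_union_right _ hx⟩
  set A' : Fin m → Finset {x // x ∈ X} := fun i => (A i).subtype (· ∈ X) with hA'
  set B' : Fin m → Finset {x // x ∈ X} := fun i => (B i).subtype (· ∈ X) with hB'
  have hcardA : ∀ i, (A' i).card = (A i).card := by
    intro i
    rw [hA', Finset.card_subtype, Finset.filter_true_of_mem (fun x hx => hAX i hx)]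
  have hcardB : ∀ i, (B' i).card = (B i).card := by
    intro i
    rw [hB', Finset.card_subtype, Finset.filter_true_of_mem (fun x hx => hBX i hx)]
  apply key A' B'
  · intro i; rw [hcardA]; exact hA i
  · intro i; rw [hcardB]; exact hB i
  · intro i
    ext x
    simp only [Finset.mem_inter, Finset.mem_subtype, Finset.notMem_empty, iff_false]
    rintro ⟨h1, h2⟩
    rw [hA', Finset.mem_subtype] at h1
    rw [hB', Finset.mem_subtype] at h2
    have : (x : α) ∈ A i ∩ B i := Finset.mem_inter.2 ⟨h1, h2⟩
    rw [hdisj i] at this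
    exact absurd this (Finset.notMem_empty _)
  · intro i j hij
    obtain ⟨x, hx⟩ := hcross i j hij
    rw [Finset.mem_inter] at hx
    exact ⟨⟨x, hAX i hx.1⟩, Finset.mem_inter.2 ⟨Finset.mem_subtype.2 hx.1,
      Finset.mem_subtype.2 hx.2⟩⟩
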